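/- Let I and Δ be finite sets, let h : I → Sym(Δ), let σ ∈ Sym(I), and let g be the permutation of the set of functions I → Δ given by (g·x)(i) = (h (σ⁻¹ i))(x (σ⁻¹ i)). Suppose g has prime order p and g is quasi-semiregular on the set of functions I → Δ. Then σ is the identity permutation of I and, for every i ∈ I, the permutation h i is quasi-semiregular on Δ. -/

import Mathlib

private def wC {I Δ : Type*} (h : I → Equiv.Perm Δ) (σ : Equiv.Perm I) :
    ℕ → I → Equiv.Perm Δ
  | 0, _ => 1
  | n+1, i => h (σ⁻¹ i) * wC h σ n (σ⁻¹ i)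

private lemma wC_spec {I Δ : Type*} (h : I → Equiv.Perm Δ) (σ : Equiv.Perm I)
    (g : Equiv.Perm (I → Δ))
    (hg : ∀ (x : I → Δ) (i : I), g x i = h (σ⁻¹ i) (x (σ⁻¹ i))) :
    ∀ (n : ℕ) (x : I → Δ) (i : I),
      (g ^ n) x i = wC h σ n i (x ((σ ^ n)⁻¹ i)) := by
  intro n
  induction n with
  | zero => intro x i; simp [wC]
  | succ n ih =>
    intro x i
    have h1 : (g ^ (n+1)) x = g ((g ^ n) x) := by
      rw [pow_succ']; rfl
    have h2 : ((σ ^ (n+1))⁻¹) i = (σ ^ n)⁻¹ (σ⁻¹ i) := by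
      rw [pow_succ', mul_inv_rev]; rfl
    rw [h1, hg, ih, h2]
    rfl

/-- A permutation `g` of `Ω` is *quasi-semiregular* if `g` fixes exactly one point `α`
and no power of `g` other than the identity fixes any point of `Ω \ {α}`. -/
def IsQuasiSemiregularPerm {Ω : Type*} (g : Equiv.Perm Ω) : Prop :=
  ∃ α : Ω, (∀ β : Ω, g β = β ↔ β = α) ∧
    ∀ (n : ℤ) (β : Ω), β ≠ α → (g ^ n) β = β → g ^ n = 1

theorem stmt11 {I Δ : Type*} [Fintype I] [Fintype Δ] {p : ℕ} (hp : p.Prime)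
    (h : I → Equiv.Perm Δ) (σ : Equiv.Perm I)
    (g : Equiv.Perm (I → Δ))
    (hg : ∀ (x : I → Δ) (i : I), g x i = h (σ⁻¹ i) (x (σ⁻¹ i)))
    (hordg : orderOf g = p) (hq : IsQuasiSemiregularPerm g) :
    σ = 1 ∧ ∀ i : I, IsQuasiSemiregularPerm (h i) := by
  classical
  obtain ⟨α, hα, hαpow⟩ := hq
  have hgα : g α = α := (hα α).mpr rfl
  have hgp : g ^ p = 1 := by rw [← hordg]; exact pow_orderOf_eq_one g
  -- Δ is nontrivial
  have hΔ : Nontrivial Δ := by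
    by_contra hn
    have hs : Subsingleton Δ := not_nontrivial_iff_subsingleton.mp hn
    have hg1 : g = 1 := Equiv.ext fun x => funext fun i => Subsingleton.elim _ _
    rw [hg1, orderOf_one] at hordg
    have := hp.one_lt
    omega
  -- key formula for powers of g
  have key := wC_spec h σ g hg
  -- fixed points of powers
  have fixpow : ∀ (τ : Equiv.Perm I) (y : I), τ y = y → ∀ c : ℕ, (τ ^ c) y = y := by
    intro τ y hy c
    induction c with
    | zero => simp
    | succ c ih =>
      have e : (τ ^ (c+1)) y = τ ((τ ^ c) y) := by rw [pow_succ']; rfl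
      rw [e, ih, hy]
  -- the base permutation satisfies σ^p = 1
  have hσp : σ ^ p = 1 := by
    have hfix : ∀ i : I, (σ ^ p)⁻¹ i = i := by
      intro i
      by_contra hne
      obtain ⟨d, d', hdd⟩ := hΔ
      have k1 := key p (fun _ => d) i
      have k2 := key p (Function.update (fun _ => d) ((σ ^ p)⁻¹ i) d') i
      rw [hgp] at k1 k2
      simp only [Equiv.Perm.one_apply] at k1 k2
      rw [Function.update_self] at k2
      rw [Function.update_of_ne (Ne.symm hne)] at k2
      exact hdd ((wC h σ p i).injective (k1.symm.trans k2))
    ext i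
    have h2 := hfix ((σ ^ p) i)
    rw [Equiv.Perm.coe_inv, Equiv.symm_apply_apply] at h2
    simpa using h2.symm
  -- the cycle products of length p are trivial
  have hC : ∀ i : I, wC h σ p i = 1 := by
    intro i
    ext d
    have k1 := key p (fun _ => d) i
    rw [hgp] at k1
    simpa using k1.symm
  -- step 2 : σ = 1
  have hσ1 : σ = 1 := by
    by_contra hσne
    obtain ⟨j, hj⟩ : ∃ j : I, σ j ≠ j := by
      by_contra hc
      push_neg at hc
      exact hσne (Equiv.ext fun i => hc i)
    have hordσ : orderOf σ = p := by
      rcases hp.eq_one_or_self_of_dvd _ (orderOf_dvd_of_pow_eq_one hσp) with h1 | h1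
      · exact absurd (orderOf_eq_one_iff.mp h1) hσne
      · exact h1
    -- uniqueness of orbit indexing
    have uniq_le : ∀ a b : ℕ, a ≤ b → b < p → (σ ^ a) j = (σ ^ b) j → a = b := by
      intro a b hab hbp he
      by_contra hne
      set m := b - a with hm
      have hm0 : 0 < m := by omega
      have hmp : m < p := by omega
      have hy : (σ ^ m) ((σ ^ a) j) = (σ ^ a) j := by
        have e2 : (σ ^ m) ((σ ^ a) j) = (σ ^ b) j := by
          rw [← Equiv.Perm.mul_apply, ← pow_add, Nat.sub_add_cancel hab]
        rw [e2, ← he]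
      have hcop : Nat.Coprime m p :=
        Nat.coprime_comm.mp (hp.coprime_iff_not_dvd.mpr (Nat.not_dvd_of_pos_of_lt hm0 hmp))
      obtain ⟨c, -, hc⟩ := Nat.exists_mul_mod_eq_one_of_coprime hcop hp.one_lt
      have hσeq : σ = (σ ^ m) ^ c := by
        rw [← pow_mul]
        calc σ = σ ^ (m * c % p) := by rw [hc]; exact (pow_one σ).symm
        _ = σ ^ (m * c) := by rw [← hordσ]; exact pow_mod_orderOf σ (m * c)
      have h3 := fixpow (σ ^ m) _ hy c
      rw [← hσeq] at h3
      have comm : σ ((σ ^ a) j) = (σ ^ a) (σ j) := by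
        rw [← Equiv.Perm.mul_apply, ← Equiv.Perm.mul_apply, ← pow_succ', ← pow_succ]
      rw [comm] at h3
      exact hj ((σ ^ a).injective h3)
    have uniq : ∀ a b : ℕ, a < p → b < p → (σ ^ a) j = (σ ^ b) j → a = b := by
      intro a b ha hb he
      rcases le_total a b with hab | hab
      · exact uniq_le a b hab hb he
      · exact (uniq_le b a hab ha he.symm).symm
    -- build a second fixed point of g
    obtain ⟨δ, hδ⟩ := exists_ne (α j)
    set v : ℕ → Δ := fun k => wC h σ k ((σ ^ k) j) δ with hv
    have hstep : ∀ k : ℕ, σ⁻¹ ((σ ^ (k+1)) j) = (σ ^ k) j := by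
      intro k
      have e : (σ ^ (k+1)) j = σ ((σ ^ k) j) := by rw [pow_succ']; rfl
      rw [e, Equiv.Perm.coe_inv, Equiv.symm_apply_apply]
    have hv_succ : ∀ k : ℕ, v (k+1) = h ((σ ^ k) j) (v k) := by
      intro k
      show wC h σ (k+1) ((σ ^ (k+1)) j) δ = _
      simp only [wC, Equiv.Perm.mul_apply, hstep k]
      rfl
    have hv0 : v 0 = δ := by simp [hv, wC]
    have hvp : v p = δ := by
      show wC h σ p ((σ ^ p) j) δ = δ
      rw [hσp]
      simp [hC j]
    set x : I → Δ := fun i => if hk : ∃ k, k < p ∧ (σ ^ k) j = i then v hk.choose else α i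
      with hxdef
    have hxk : ∀ k : ℕ, k < p → x ((σ ^ k) j) = v k := by
      intro k hk
      have hP : ∃ k', k' < p ∧ (σ ^ k') j = (σ ^ k) j := ⟨k, hk, rfl⟩
      show (if hk : _ then _ else _) = v k
      rw [dif_pos hP]
      have := uniq _ _ hP.choose_spec.1 hk hP.choose_spec.2
      rw [this]
    have hxout : ∀ i : I, (¬ ∃ k, k < p ∧ (σ ^ k) j = i) → x i = α i := by
      intro i hi
      show (if hk : _ then _ else _) = α i
      rw [dif_neg hi]
    have hxj : x j = δ := by
      have := hxk 0 hp.pos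
      simpa [hv0] using this
    have hgx : g x = x := by
      funext i
      rw [hg]
      by_cases hPi : ∃ k, k < p ∧ (σ ^ k) j = i
      · obtain ⟨k, hk, hki⟩ := hPi
        subst hki
        cases k with
        | zero =>
          simp only [pow_zero, Equiv.Perm.one_apply]
          have e : σ⁻¹ j = (σ ^ (p-1)) j := by
            have e2 : (σ ^ ((p-1)+1)) j = j := by
              rw [Nat.sub_add_cancel hp.pos, hσp]; rfl
            rw [pow_succ'] at e2
            calc σ⁻¹ j = σ⁻¹ (σ ((σ ^ (p-1)) j)) := by
                  rw [show σ ((σ ^ (p-1)) j) = j from e2]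
              _ = (σ ^ (p-1)) j := Equiv.symm_apply_apply _ _
          rw [e, hxk (p-1) (Nat.sub_lt hp.pos one_pos), hxj, ← hvp,
            show p = (p-1)+1 from (Nat.sub_add_cancel hp.pos).symm, hv_succ,
            Nat.add_sub_cancel]
        | succ k' =>
          have hk' : k' < p := by omega
          rw [hstep k', hxk k' hk', hxk (k'+1) hk, hv_succ]
      · have hPinv : ¬ ∃ k, k < p ∧ (σ ^ k) j = σ⁻¹ i := by
          rintro ⟨k, hk, hki⟩
          apply hPi
          have e : (σ ^ (k+1)) j = i := by
            rw [pow_succ', Equiv.Perm.mul_apply, hki, Equiv.Perm.coe_inv, Equiv.apply_symm_apply]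
          by_cases hkp : k + 1 < p
          · exact ⟨k+1, hkp, e⟩
          · have hkp' : k + 1 = p := by omega
            refine ⟨0, hp.pos, ?_⟩
            rw [hkp', hσp] at e
            simpa using e
        rw [hxout _ hPinv, hxout _ hPi]
        calc h (σ⁻¹ i) (α (σ⁻¹ i)) = g α i := (hg α i).symm
          _ = α i := by rw [hgα]
    have := (hα x).mp hgx
    rw [this] at hxj
    exact hδ hxj.symm
  -- part 2 : each h i is quasi-semiregular
  refine ⟨hσ1, fun i₀ => ?_⟩
  have hg' : ∀ (x : I → Δ) (i : I), g x i = h i (x i) := by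
    intro x i
    rw [hg, hσ1]
    simp
  have powN : ∀ (n : ℕ) (x : I → Δ) (i : I), (g ^ n) x i = ((h i) ^ n) (x i) := by
    intro n
    induction n with
    | zero => intro x i; simp
    | succ n ih =>
      intro x i
      have h1 : (g ^ (n+1)) x = g ((g ^ n) x) := by rw [pow_succ']; rfl
      rw [h1, hg', ih, ← Equiv.Perm.mul_apply, ← pow_succ']
  have powZ : ∀ (n : ℤ) (x : I → Δ) (i : I), (g ^ n) x i = ((h i) ^ n) (x i) := by
    intro n x i
    cases n with
    | ofNat m =>
      simp only [Int.ofNat_eq_coe, zpow_natCast]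
      exact powN m x i
    | negSucc m =>
      rw [zpow_negSucc, zpow_negSucc]
      have hy : (g ^ (m+1)) (fun i => ((h i) ^ (m+1))⁻¹ (x i)) = x :=
        funext fun i => by rw [powN]; exact Equiv.apply_symm_apply _ _
      have e : (g ^ (m+1))⁻¹ x = fun i => ((h i) ^ (m+1))⁻¹ (x i) := by
        apply (g ^ (m+1)).injective
        rw [Equiv.Perm.coe_inv, Equiv.apply_symm_apply, hy]
      rw [e]
  have hfixN : ∀ m : ℕ, (g ^ m) α = α := by
    intro m
    induction m with
    | zero => simp
    | succ m ih =>
      have h1 : (g ^ (m+1)) α = g ((g ^ m) α) := by rw [pow_succ']; rfl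
      rw [h1, ih, hgα]
  have hfixZ : ∀ n : ℤ, (g ^ n) α = α := by
    intro n
    cases n with
    | ofNat m => simp only [Int.ofNat_eq_coe, zpow_natCast]; exact hfixN m
    | negSucc m =>
      rw [zpow_negSucc]
      conv_lhs => rw [← hfixN (m+1)]
      rw [Equiv.Perm.coe_inv, Equiv.symm_apply_apply]
  have hαi : ∀ i : I, h i (α i) = α i := by
    intro i
    rw [← hg']
    exact congrFun hgα i
  refine ⟨α i₀, ?_, ?_⟩
  · intro β
    constructor
    · intro hβ
      have hx : g (Function.update α i₀ β) = Function.update α i₀ β := by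
        funext i
        rw [hg']
        by_cases hi : i = i₀
        · subst hi; rw [Function.update_self, hβ]
        · rw [Function.update_of_ne hi]; exact hαi i
      have := congrFun ((hα _).mp hx) i₀
      rwa [Function.update_self] at this
    · rintro rfl
      exact hαi i₀
  · intro n β hβ hfix
    set x := Function.update α i₀ β with hxdef
    have hxne : x ≠ α := by
      intro hc
      apply hβ
      have := congrFun hc i₀
      rwa [hxdef, Function.update_self] at this
    have hgx : (g ^ n) x = x := by
      funext i
      rw [powZ]
      by_cases hi : i = i₀
      · subst hi; rw [hxdef, Function.update_self]; exact hfix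
      · rw [hxdef, Function.update_of_ne hi]
        have e := powZ n α i
        rw [hfixZ n] at e
        exact e.symm
    have hone := hαpow n x hxne hgx
    ext d
    have e := powZ n (Function.update α i₀ d) i₀
    rw [hone, Function.update_self] at e
    simpa using e.symm
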